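/- Let μ be the uniform probability measure on {-1,1}^n. There exists a universal constant κ > 0 (independent of n and V) such that for every countable subset V ⊂ ℝ^n, log ∫ exp( sup_{ξ ∈ V} ( ⟨ξ,x⟩ - Λ_μ(ξ) ) ) dμ(x) ≤ κ · b(V), where Λ_μ(ξ) = log ∫ e^{⟨ξ,x⟩} dμ(x) and b(V) = E[ sup_{ξ ∈ V} ⟨ξ,ε⟩ ] with ε uniformly distributed on {-1,1}^n. -/

import Mathlib

open MeasureTheory Real Set ENNReal
open scoped Classical

/-- The uniform probability measure on the discrete hypercube `{-1,1}ⁿ`,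
viewed as a measure on `ℝⁿ`. -/
noncomputable def cubeUniform (n : ℕ) : Measure (Fin n → ℝ) :=
  Measure.pi fun _ =>
    ((2 : ℝ≥0∞)⁻¹ • Measure.dirac (-1 : ℝ) + (2 : ℝ≥0∞)⁻¹ • Measure.dirac (1 : ℝ))

/-- The logarithmic Laplace transform `Λ_μ(ξ) = log ∫ e^{⟨ξ,x⟩} dμ(x)` of the uniform
measure on `{-1,1}ⁿ`. -/
noncomputable def logLaplaceCube (n : ℕ) (ξ : Fin n → ℝ) : ℝ :=
  Real.log (∫ x, Real.exp (∑ i, ξ i * x i) ∂cubeUniform n)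

namespace StrongAux

lemma sum_prod_bool {R : Type*} [CommSemiring R] (n : ℕ) (g : Fin n → Bool → R) :
    ∑ s : Fin n → Bool, ∏ i, g i (s i) = ∏ i, (g i true + g i false) := by
  rw [← Fintype.piFinset_univ, Finset.sum_prod_piFinset]
  simp

instance : IsProbabilityMeasure
    ((2 : ℝ≥0∞)⁻¹ • Measure.dirac (-1 : ℝ) + (2 : ℝ≥0∞)⁻¹ • Measure.dirac (1 : ℝ)) := by
  constructor
  simp [Measure.add_apply, Measure.smul_apply]
  exact ENNReal.inv_two_add_inv_two

/-- The sign of a boolean. -/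
def sb (b : Bool) : ℝ := if b then 1 else -1

/-- The sign vector of a boolean vector. -/
def sgn {n : ℕ} (s : Fin n → Bool) : Fin n → ℝ := fun i => sb (s i)

lemma cubeUniform_eq_sum (n : ℕ) :
    cubeUniform n
      = ∑ s : Fin n → Bool, ((2 : ℝ≥0∞) ^ n)⁻¹ • Measure.dirac (sgn s) := by
  refine Measure.pi_eq fun A hA => ?_
  rw [Measure.finset_sum_apply]
  have hmeas : MeasurableSet (Set.univ.pi A) := MeasurableSet.univ_pi hA
  set g : Fin n → Bool → ℝ≥0∞ := fun i b => (2 : ℝ≥0∞)⁻¹ * (A i).indicator 1 (sb b) with hg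
  have hterm : ∀ s : Fin n → Bool,
      (((2 : ℝ≥0∞) ^ n)⁻¹ • Measure.dirac (sgn s)) (Set.univ.pi A)
        = ∏ i, g i (s i) := by
    intro s
    rw [Measure.smul_apply, smul_eq_mul, Measure.dirac_apply' _ hmeas]
    simp only [hg]
    rw [Finset.prod_mul_distrib, Finset.prod_const, Finset.card_univ, Fintype.card_fin,
      ← ENNReal.inv_pow]
    congr 1
    by_cases h : ∀ i, sgn s i ∈ A i
    · rw [Set.indicator_of_mem (Set.mem_univ_pi.mpr h)]
      have h' : ∀ x : Fin n, sb (s x) ∈ A x := h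
      rw [Finset.prod_congr rfl (fun i _ => Set.indicator_of_mem (h' i) 1)]
      simp
    · push_neg at h
      obtain ⟨i₀, hi₀⟩ := h
      have hi₀' : sb (s i₀) ∉ A i₀ := hi₀
      rw [Set.indicator_of_notMem (fun hmem => hi₀ (Set.mem_univ_pi.mp hmem i₀))]
      exact (Finset.prod_eq_zero (Finset.mem_univ i₀)
        (by rw [Set.indicator_of_notMem hi₀'])).symm
  rw [Finset.sum_congr rfl (fun s _ => hterm s), sum_prod_bool]
  refine Finset.prod_congr rfl fun i _ => ?_
  rw [Measure.add_apply, Measure.smul_apply, Measure.smul_apply, smul_eq_mul, smul_eq_mul,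
    Measure.dirac_apply' _ (hA i), Measure.dirac_apply' _ (hA i)]
  simp only [hg, sb]
  simp [add_comm]

lemma integral_cubeUniform {n : ℕ} (f : (Fin n → ℝ) → ℝ) :
    ∫ x, f x ∂cubeUniform n = ((2:ℝ)^n)⁻¹ * ∑ s : Fin n → Bool, f (sgn s) := by
  have hint : ∀ s : Fin n → Bool,
      Integrable f (((2 : ℝ≥0∞) ^ n)⁻¹ • Measure.dirac (sgn s)) := by
    intro s
    refine Integrable.smul_measure ?_ (by simp)
    exact (integrable_const (f (sgn s))).congr (ae_eq_dirac f).symm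
  rw [cubeUniform_eq_sum, integral_finset_sum_measure (fun s _ => hint s)]
  rw [Finset.mul_sum]
  refine Finset.sum_congr rfl fun s _ => ?_
  rw [integral_smul_measure, integral_dirac, smul_eq_mul]
  congr 1
  simp [ENNReal.toReal_inv, ENNReal.toReal_pow]


noncomputable def lc (t : ℝ) : ℝ := Real.log (Real.cosh t)

lemma lc_nonneg (t : ℝ) : 0 ≤ lc t := Real.log_nonneg (Real.one_le_cosh t)

lemma ratio_le {a a' M M' : ℝ} (ha : 0 < a) (ha' : 0 < a') (haM : a ≤ M) (haM' : a' ≤ M') :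
    a^2 * a' / (a + a') ≤ M^2 * M' / (M + M') := by
  have hM : 0 < M := lt_of_lt_of_le ha haM
  have hM' : 0 < M' := lt_of_lt_of_le ha' haM'
  rw [div_le_div_iff₀ (by positivity) (by positivity)]
  have h1 : (a * a') * (a * M) ≤ (M * M') * (a * M) :=
    mul_le_mul_of_nonneg_right
      (mul_le_mul haM haM' ha'.le hM.le) (by positivity)
  have h2 : (a^2) * (a' * M') ≤ (M^2) * (a' * M') :=
    mul_le_mul_of_nonneg_right (by nlinarith) (by positivity)
  nlinarith [h1, h2]

lemma core_ineq {a a' b b' : ℝ} (ha : 0 < a) (ha' : 0 < a') (hb : 0 < b) (hb' : 0 < b') :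
    a^2 * a' / (a + a') + b'^2 * b / (b + b') ≤ max a b * max a' b' := by
  set M := max a b with hM
  set M' := max a' b' with hM'
  have hMpos : 0 < M := lt_max_of_lt_left ha
  have hM'pos : 0 < M' := lt_max_of_lt_left ha'
  have h1 : a^2 * a' / (a + a') ≤ M^2 * M' / (M + M') :=
    ratio_le ha ha' (le_max_left _ _) (le_max_left _ _)
  have h2 : b'^2 * b / (b' + b) ≤ M'^2 * M / (M' + M) :=
    ratio_le hb' hb (le_max_right a' b') (le_max_right a b)
  rw [add_comm b b']
  have h3 : M^2 * M' / (M + M') + M'^2 * M / (M' + M) = M * M' := by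
    rw [show M' + M = M + M' by ring]
    field_simp
  linarith

lemma key2 (u₁ u₂ t₁ t₂ : ℝ) :
    Real.exp (u₁ + t₁ - lc t₁) + Real.exp (u₂ - t₂ - lc t₂)
      ≤ 2 * Real.exp ((max (u₁ + 2*t₁) (u₂ + 2*t₂) + max (u₁ - 2*t₁) (u₂ - 2*t₂)) / 2) := by
  set a := exp ((u₁ + 2*t₁)/2) with hadef
  set a' := exp ((u₁ - 2*t₁)/2) with ha'def
  set b := exp ((u₂ + 2*t₂)/2) with hbdef
  set b' := exp ((u₂ - 2*t₂)/2) with hb'def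
  have ha : 0 < a := exp_pos _
  have ha' : 0 < a' := exp_pos _
  have hb : 0 < b := exp_pos _
  have hb' : 0 < b' := exp_pos _
  have h1 : Real.exp (u₁ + t₁ - lc t₁) = 2 * (a^2 * a') / (a + a') := by
    rw [Real.exp_sub, lc, Real.exp_log (Real.cosh_pos t₁), Real.cosh_eq,
      div_eq_div_iff (by positivity) (by positivity)]
    have L1 : exp (u₁+t₁) * a = exp ((3*u₁+4*t₁)/2) := by
      rw [hadef, ← Real.exp_add]; congr 1; ring
    have L2 : exp (u₁+t₁) * a' = exp ((3*u₁)/2) := by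
      rw [ha'def, ← Real.exp_add]; congr 1; ring
    have R1 : a^2*a' * exp t₁ = exp ((3*u₁+4*t₁)/2) := by
      rw [hadef, ha'def, pow_two, ← Real.exp_add, ← Real.exp_add, ← Real.exp_add]; congr 1; ring
    have R2 : a^2*a' * exp (-t₁) = exp ((3*u₁)/2) := by
      rw [hadef, ha'def, pow_two, ← Real.exp_add, ← Real.exp_add, ← Real.exp_add]; congr 1; ring
    linear_combination L1 + L2 - R1 - R2
  have h2 : Real.exp (u₂ - t₂ - lc t₂) = 2 * (b'^2 * b) / (b + b') := by
    rw [Real.exp_sub, lc, Real.exp_log (Real.cosh_pos t₂), Real.cosh_eq,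
      div_eq_div_iff (by positivity) (by positivity)]
    have L1 : exp (u₂-t₂) * b = exp ((3*u₂)/2) := by
      rw [hbdef, ← Real.exp_add]; congr 1; ring
    have L2 : exp (u₂-t₂) * b' = exp ((3*u₂-4*t₂)/2) := by
      rw [hb'def, ← Real.exp_add]; congr 1; ring
    have R1 : b'^2*b * exp t₂ = exp ((3*u₂)/2) := by
      rw [hbdef, hb'def, pow_two, ← Real.exp_add, ← Real.exp_add, ← Real.exp_add]; congr 1; ring
    have R2 : b'^2*b * exp (-t₂) = exp ((3*u₂-4*t₂)/2) := by
      rw [hbdef, hb'def, pow_two, ← Real.exp_add, ← Real.exp_add, ← Real.exp_add]; congr 1; ring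
    linear_combination L1 + L2 - R1 - R2
  have h3 : Real.exp ((max (u₁ + 2*t₁) (u₂ + 2*t₂) + max (u₁ - 2*t₁) (u₂ - 2*t₂)) / 2)
      = max a b * max a' b' := by
    rw [add_div, Real.exp_add]
    congr 1
    · rw [← max_div_div_right (by norm_num : (0:ℝ) ≤ 2)]
      exact Real.exp_monotone.map_max
    · rw [← max_div_div_right (by norm_num : (0:ℝ) ≤ 2)]
      exact Real.exp_monotone.map_max
  rw [h1, h2, h3]
  have := core_ineq ha ha' hb hb'
  calc 2 * (a^2*a') / (a+a') + 2 * (b'^2*b) / (b+b')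
      = 2 * (a^2*a'/(a+a') + b'^2*b/(b+b')) := by ring
    _ ≤ 2 * (max a b * max a' b') := by linarith




lemma prod_rpow_exp {ι : Type*} [Fintype ι] (f : ι → ℝ) (hf : ∀ i, 0 < f i) (w : ℝ) :
    ∏ i, (f i) ^ w = Real.exp ((∑ i, Real.log (f i)) * w) := by
  rw [Finset.sum_mul, Real.exp_sum]
  exact Finset.prod_congr rfl fun i _ => by
    rw [Real.rpow_def_of_pos (hf i)]

lemma step_avg {ι : Type*} [Fintype ι] [Nonempty ι] (a b c : ι → ℝ)
    (h : ∀ i, Real.exp (a i) + Real.exp (b i) ≤ 2 * Real.exp (c i)) :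
    Real.exp ((∑ i, a i) / (Fintype.card ι : ℝ))
      + Real.exp ((∑ i, b i) / (Fintype.card ι : ℝ))
      ≤ 2 * Real.exp ((∑ i, c i) / (Fintype.card ι : ℝ)) := by
  set N : ℝ := (Fintype.card ι : ℝ) with hN
  have hN0 : 0 < N := by
    rw [hN]; exact_mod_cast Fintype.card_pos
  set S : ι → ℝ := fun i => Real.exp (a i) + Real.exp (b i) with hS
  have hSpos : ∀ i, 0 < S i := fun i => by positivity
  have hw : ∀ i ∈ Finset.univ (α := ι), (0:ℝ) ≤ 1/N := fun i _ => by positivity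
  have hw' : ∑ _i : ι, (1/N : ℝ) = 1 := by
    rw [Finset.sum_const, Finset.card_univ, nsmul_eq_mul]
    field_simp
    exact hN.symm
  have hA := Real.geom_mean_le_arith_mean_weighted Finset.univ (fun _ => 1/N)
    (fun i => Real.exp (a i) / S i) hw hw' (fun i _ => by positivity)
  have hB := Real.geom_mean_le_arith_mean_weighted Finset.univ (fun _ => 1/N)
    (fun i => Real.exp (b i) / S i) hw hw' (fun i _ => by positivity)
  have hsum : (∑ i, (1/N) * (Real.exp (a i) / S i)) + (∑ i, (1/N) * (Real.exp (b i) / S i)) = 1 := by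
    rw [← Finset.sum_add_distrib]
    have : ∀ i, (1/N) * (Real.exp (a i) / S i) + (1/N) * (Real.exp (b i) / S i) = 1/N := by
      intro i
      have h9 : Real.exp (a i) / S i + Real.exp (b i) / S i = 1 := by
        rw [← add_div, hS]
        exact div_self (hSpos i).ne'
      rw [← mul_add, h9, mul_one]
    rw [Finset.sum_congr rfl (fun i _ => this i)]
    exact hw'
  -- identify the geometric means
  have hgA : ∏ i, (Real.exp (a i) / S i) ^ (1/N : ℝ)
      = Real.exp (((∑ i, a i) - ∑ i, Real.log (S i)) * (1/N)) := by
    rw [prod_rpow_exp _ (fun i => by positivity)]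
    congr 1
    rw [← Finset.sum_sub_distrib]
    congr 1
    refine Finset.sum_congr rfl fun i _ => ?_
    rw [Real.log_div (Real.exp_ne_zero _) (hSpos i).ne', Real.log_exp]
  have hgB : ∏ i, (Real.exp (b i) / S i) ^ (1/N : ℝ)
      = Real.exp (((∑ i, b i) - ∑ i, Real.log (S i)) * (1/N)) := by
    rw [prod_rpow_exp _ (fun i => by positivity)]
    congr 1
    rw [← Finset.sum_sub_distrib]
    congr 1
    refine Finset.sum_congr rfl fun i _ => ?_
    rw [Real.log_div (Real.exp_ne_zero _) (hSpos i).ne', Real.log_exp]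
  rw [hgA] at hA
  rw [hgB] at hB
  -- combine
  set L : ℝ := ∑ i, Real.log (S i) with hL
  have hmain : Real.exp ((∑ i, a i)/N) + Real.exp ((∑ i, b i)/N) ≤ Real.exp (L / N) := by
    have hmul : (Real.exp (((∑ i, a i) - L) * (1/N)) + Real.exp (((∑ i, b i) - L) * (1/N)))
        * Real.exp (L / N) ≤ 1 * Real.exp (L / N) := by
      apply mul_le_mul_of_nonneg_right _ (Real.exp_pos _).le
      calc Real.exp (((∑ i, a i) - L) * (1/N)) + Real.exp (((∑ i, b i) - L) * (1/N))
          ≤ (∑ i, (1/N) * (Real.exp (a i) / S i)) + (∑ i, (1/N) * (Real.exp (b i) / S i)) :=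
            add_le_add hA hB
        _ = 1 := hsum
    rw [add_mul, ← Real.exp_add, ← Real.exp_add, one_mul] at hmul
    have e1 : ((∑ i, a i) - L) * (1/N) + L / N = (∑ i, a i)/N := by field_simp; ring
    have e2 : ((∑ i, b i) - L) * (1/N) + L / N = (∑ i, b i)/N := by field_simp; ring
    rwa [e1, e2] at hmul
  refine hmain.trans ?_
  have hLle : L ≤ N * Real.log 2 + ∑ i, c i := by
    rw [hL]
    have : ∀ i, Real.log (S i) ≤ Real.log 2 + c i := by
      intro i
      have h2 : S i ≤ 2 * Real.exp (c i) := h i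
      calc Real.log (S i) ≤ Real.log (2 * Real.exp (c i)) :=
            Real.log_le_log (hSpos i) h2
        _ = Real.log 2 + c i := by
            rw [Real.log_mul (by norm_num) (Real.exp_ne_zero _), Real.log_exp]
    calc ∑ i, Real.log (S i) ≤ ∑ i, (Real.log 2 + c i) := Finset.sum_le_sum (fun i _ => this i)
      _ = N * Real.log 2 + ∑ i, c i := by
          rw [Finset.sum_add_distrib, Finset.sum_const, Finset.card_univ, nsmul_eq_mul]
  calc Real.exp (L / N) ≤ Real.exp ((N * Real.log 2 + ∑ i, c i) / N) :=
        Real.exp_le_exp.mpr ((div_le_div_iff_of_pos_right hN0).mpr hLle)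
    _ = 2 * Real.exp ((∑ i, c i) / N) := by
        have h8 : N * Real.log 2 / N = Real.log 2 := by field_simp
        rw [add_div, h8, Real.exp_add, Real.exp_log (by norm_num)]

lemma exp_iSup {ι' : Type*} [Nonempty ι'] (f : ι' → ℝ) (hb : BddAbove (Set.range f)) :
    Real.exp (⨆ i, f i) = ⨆ i, Real.exp (f i) :=
  Real.exp_monotone.map_ciSup_of_continuousAt (Real.continuous_exp.continuousAt) hb

lemma two_mul_iSup {ι' : Type*} [Nonempty ι'] (f : ι' → ℝ) (hb : BddAbove (Set.range f)) :
    (⨆ i, 2 * f i) = 2 * ⨆ i, f i := by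
  have hm : Monotone (fun r : ℝ => 2 * r) := fun x y h => by dsimp only; linarith
  exact (hm.map_ciSup_of_continuousAt ((continuous_const.mul continuous_id).continuousAt) hb).symm

lemma pair_sum {n : ℕ} (j : Fin n) (f : (Fin n → Bool) → ℝ) :
    ∑ y : Fin n → Bool, (f (Function.update y j true) + f (Function.update y j false))
      = 2 * ∑ y : Fin n → Bool, f y := by
  have hinv : Function.Involutive (fun y : Fin n → Bool => Function.update y j (!(y j))) := by
    intro y
    simp [Function.update_idem]
  have hstep : ∀ y : Fin n → Bool,
      f (Function.update y j true) + f (Function.update y j false)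
        = f y + f (Function.update y j (!(y j))) := by
    intro y
    cases hy : y j
    · have h1 : Function.update y j false = y := by
        rw [← hy]; exact Function.update_eq_self j y
      rw [h1]
      simp [add_comm]
    · have h1 : Function.update y j true = y := by
        rw [← hy]; exact Function.update_eq_self j y
      rw [h1]
      simp
  rw [Finset.sum_congr rfl (fun y _ => hstep y), Finset.sum_add_distrib]
  have : ∑ y : Fin n → Bool, f (Function.update y j (!(y j)))
      = ∑ y : Fin n → Bool, f y := by
    have := Equiv.sum_comp (Function.Involutive.toPerm _ hinv) f
    simpa [Function.Involutive.toPerm] using this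
  rw [this]; ring



/-! ### The interpolation machinery -/

lemma sb_true : sb true = 1 := rfl
lemma sb_false : sb false = -1 := rfl

noncomputable def Gf (n : ℕ) (K : Finset (Fin n)) (ξ : Fin n → ℝ) (y ε : Fin n → Bool) : ℝ :=
  ∑ i, if i ∈ K then ξ i * sgn y i - lc (ξ i) else 2 * ξ i * sgn ε i

noncomputable def SG (n : ℕ) (V : Set (Fin n → ℝ)) (K : Finset (Fin n))
    (y ε : Fin n → Bool) : ℝ :=
  ⨆ ξ : V, Gf n K (ξ : Fin n → ℝ) y ε

noncomputable def IN (n : ℕ) (V : Set (Fin n → ℝ)) (K : Finset (Fin n))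
    (y : Fin n → Bool) : ℝ :=
  (∑ ε : Fin n → Bool, SG n V K y ε) / 2^n

noncomputable def PH (n : ℕ) (V : Set (Fin n → ℝ)) (K : Finset (Fin n)) : ℝ :=
  Real.log ((∑ y : Fin n → Bool, Real.exp (IN n V K y)) / 2^n)

section Main

variable {n : ℕ} {V : Set (Fin n → ℝ)}

lemma bddG (hBdd : ∀ x : Fin n → ℝ, BddAbove ((fun ξ => ∑ i, ξ i * x i) '' V))
    (K : Finset (Fin n)) (y ε : Fin n → Bool) :
    BddAbove (Set.range fun ξ : V => Gf n K (↑ξ) y ε) := by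
  obtain ⟨M, hM⟩ := hBdd (fun i => if i ∈ K then sgn y i else 2 * sgn ε i)
  refine ⟨M, ?_⟩
  rintro r ⟨ξ, rfl⟩
  have h1 : Gf n K (↑ξ) y ε
      ≤ ∑ i, (ξ : Fin n → ℝ) i * (if i ∈ K then sgn y i else 2 * sgn ε i) := by
    unfold Gf
    refine Finset.sum_le_sum fun i _ => ?_
    by_cases hi : i ∈ K
    · simp only [hi, if_true]
      have := lc_nonneg ((ξ : Fin n → ℝ) i)
      linarith
    · simp only [hi, if_false]
      exact le_of_eq (by ring)
  exact h1.trans (hM ⟨↑ξ, ξ.2, rfl⟩)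

lemma Gf_insert {K : Finset (Fin n)} {j : Fin n} (hj : j ∉ K) (ξ : Fin n → ℝ)
    (y ε : Fin n → Bool) (b : Bool) :
    Gf n (insert j K) ξ (Function.update y j b) ε
      = (∑ i ∈ Finset.univ.erase j,
          if i ∈ K then ξ i * sgn y i - lc (ξ i) else 2 * ξ i * sgn ε i)
        + (ξ j * sb b - lc (ξ j)) := by
  unfold Gf
  rw [← Finset.add_sum_erase _ _ (Finset.mem_univ j), add_comm]
  congr 1
  · refine Finset.sum_congr rfl fun i hi => ?_
    have hij : i ≠ j := (Finset.mem_erase.mp hi).1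
    have h2 : sgn (Function.update y j b) i = sgn y i := by
      unfold sgn; rw [Function.update_of_ne hij]
    by_cases hiK : i ∈ K <;> simp [Finset.mem_insert, hij, hiK, h2]
  · have h3 : sgn (Function.update y j b) j = sb b := by
      unfold sgn; rw [Function.update_self]
    simp [Finset.mem_insert_self, h3]

lemma Gf_update_eps {K : Finset (Fin n)} {j : Fin n} (hj : j ∉ K) (ξ : Fin n → ℝ)
    (y ε : Fin n → Bool) (b : Bool) :
    Gf n K ξ y (Function.update ε j b)
      = (∑ i ∈ Finset.univ.erase j,
          if i ∈ K then ξ i * sgn y i - lc (ξ i) else 2 * ξ i * sgn ε i)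
        + 2 * ξ j * sb b := by
  unfold Gf
  rw [← Finset.add_sum_erase _ _ (Finset.mem_univ j), add_comm]
  congr 1
  · refine Finset.sum_congr rfl fun i hi => ?_
    have hij : i ≠ j := (Finset.mem_erase.mp hi).1
    have h2 : sgn (Function.update ε j b) i = sgn ε i := by
      unfold sgn; rw [Function.update_of_ne hij]
    by_cases hiK : i ∈ K <;> simp [hiK, h2]
  · have h3 : sgn (Function.update ε j b) j = sb b := by
      unfold sgn; rw [Function.update_self]
    simp [hj, h3]

lemma keyFam (hne : V.Nonempty)
    (hBdd : ∀ x : Fin n → ℝ, BddAbove ((fun ξ => ∑ i, ξ i * x i) '' V))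
    (K : Finset (Fin n)) {j : Fin n} (hj : j ∉ K) (y ε : Fin n → Bool) :
    Real.exp (SG n V (insert j K) (Function.update y j true) ε)
      + Real.exp (SG n V (insert j K) (Function.update y j false) ε)
      ≤ 2 * Real.exp ((SG n V K y (Function.update ε j true)
          + SG n V K y (Function.update ε j false)) / 2) := by
  haveI : Nonempty ↥V := hne.to_subtype
  set X := 2 * Real.exp ((SG n V K y (Function.update ε j true)
      + SG n V K y (Function.update ε j false)) / 2) with hX
  have pair : ∀ ξ₁ ξ₂ : V,
      Real.exp (Gf n (insert j K) (↑ξ₁) (Function.update y j true) ε)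
        + Real.exp (Gf n (insert j K) (↑ξ₂) (Function.update y j false) ε) ≤ X := by
    intro ξ₁ ξ₂
    set C : (Fin n → ℝ) → ℝ := fun ξ =>
      ∑ i ∈ Finset.univ.erase j,
        if i ∈ K then ξ i * sgn y i - lc (ξ i) else 2 * ξ i * sgn ε i with hC
    rw [Gf_insert hj (↑ξ₁) y ε true, Gf_insert hj (↑ξ₂) y ε false]
    have e1 : C ↑ξ₁ + ((↑ξ₁ : Fin n → ℝ) j * sb true - lc ((↑ξ₁ : Fin n → ℝ) j))
        = C ↑ξ₁ + (↑ξ₁ : Fin n → ℝ) j - lc ((↑ξ₁ : Fin n → ℝ) j) := by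
      rw [sb_true]; ring
    have e2 : C ↑ξ₂ + ((↑ξ₂ : Fin n → ℝ) j * sb false - lc ((↑ξ₂ : Fin n → ℝ) j))
        = C ↑ξ₂ - (↑ξ₂ : Fin n → ℝ) j - lc ((↑ξ₂ : Fin n → ℝ) j) := by
      rw [sb_false]; ring
    rw [e1, e2]
    refine (key2 (C ↑ξ₁) (C ↑ξ₂) ((↑ξ₁ : Fin n → ℝ) j) ((↑ξ₂ : Fin n → ℝ) j)).trans ?_
    rw [hX]
    have hg1 : C ↑ξ₁ + 2 * (↑ξ₁ : Fin n → ℝ) j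
        = Gf n K (↑ξ₁) y (Function.update ε j true) := by
      rw [Gf_update_eps hj, sb_true, hC]; ring
    have hg2 : C ↑ξ₂ + 2 * (↑ξ₂ : Fin n → ℝ) j
        = Gf n K (↑ξ₂) y (Function.update ε j true) := by
      rw [Gf_update_eps hj, sb_true, hC]; ring
    have hg3 : C ↑ξ₁ - 2 * (↑ξ₁ : Fin n → ℝ) j
        = Gf n K (↑ξ₁) y (Function.update ε j false) := by
      rw [Gf_update_eps hj, sb_false, hC]; ring
    have hg4 : C ↑ξ₂ - 2 * (↑ξ₂ : Fin n → ℝ) j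
        = Gf n K (↑ξ₂) y (Function.update ε j false) := by
      rw [Gf_update_eps hj, sb_false, hC]; ring
    have hm1 : max (C ↑ξ₁ + 2 * (↑ξ₁ : Fin n → ℝ) j) (C ↑ξ₂ + 2 * (↑ξ₂ : Fin n → ℝ) j)
        ≤ SG n V K y (Function.update ε j true) := by
      refine max_le ?_ ?_
      · rw [hg1]; exact le_ciSup (bddG hBdd K y (Function.update ε j true)) ξ₁
      · rw [hg2]; exact le_ciSup (bddG hBdd K y (Function.update ε j true)) ξ₂
    have hm2 : max (C ↑ξ₁ - 2 * (↑ξ₁ : Fin n → ℝ) j) (C ↑ξ₂ - 2 * (↑ξ₂ : Fin n → ℝ) j)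
        ≤ SG n V K y (Function.update ε j false) := by
      refine max_le ?_ ?_
      · rw [hg3]; exact le_ciSup (bddG hBdd K y (Function.update ε j false)) ξ₁
      · rw [hg4]; exact le_ciSup (bddG hBdd K y (Function.update ε j false)) ξ₂
    exact mul_le_mul_of_nonneg_left (Real.exp_le_exp.mpr (by linarith)) (by norm_num)
  have hb1 := bddG hBdd (insert j K) (Function.update y j true) ε
  have hb2 := bddG hBdd (insert j K) (Function.update y j false) ε
  show Real.exp (SG n V (insert j K) (Function.update y j true) ε)
      + Real.exp (SG n V (insert j K) (Function.update y j false) ε) ≤ X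
  unfold SG
  rw [exp_iSup _ hb1, exp_iSup _ hb2]
  have h2 : ∀ ξ₁ : V,
      Real.exp (Gf n (insert j K) (↑ξ₁) (Function.update y j true) ε)
        ≤ X - ⨆ ξ₂ : V, Real.exp (Gf n (insert j K) (↑ξ₂) (Function.update y j false) ε) := by
    intro ξ₁
    have h3 : (⨆ ξ₂ : V, Real.exp (Gf n (insert j K) (↑ξ₂) (Function.update y j false) ε))
        ≤ X - Real.exp (Gf n (insert j K) (↑ξ₁) (Function.update y j true) ε) :=
      ciSup_le fun ξ₂ => by have := pair ξ₁ ξ₂; linarith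
    linarith
  have h4 := ciSup_le h2
  linarith

lemma step_y (hne : V.Nonempty)
    (hBdd : ∀ x : Fin n → ℝ, BddAbove ((fun ξ => ∑ i, ξ i * x i) '' V))
    (K : Finset (Fin n)) {j : Fin n} (hj : j ∉ K) (y : Fin n → Bool) :
    Real.exp (IN n V (insert j K) (Function.update y j true))
      + Real.exp (IN n V (insert j K) (Function.update y j false))
      ≤ 2 * Real.exp (IN n V K y) := by
  have hcard : ((Fintype.card (Fin n → Bool)) : ℝ) = 2^n := by
    have : Fintype.card (Fin n → Bool) = 2^n := by simp
    rw [this]; push_cast; ring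
  have hs := step_avg (ι := Fin n → Bool)
      (fun ε => SG n V (insert j K) (Function.update y j true) ε)
      (fun ε => SG n V (insert j K) (Function.update y j false) ε)
      (fun ε => (SG n V K y (Function.update ε j true)
        + SG n V K y (Function.update ε j false)) / 2)
      (fun ε => by simpa using keyFam hne hBdd K hj y ε)
  rw [hcard] at hs
  have hc2 : (∑ ε : Fin n → Bool, (SG n V K y (Function.update ε j true)
      + SG n V K y (Function.update ε j false)) / 2)
      = ∑ ε : Fin n → Bool, SG n V K y ε := by
    rw [← Finset.sum_div, pair_sum j (fun ε => SG n V K y ε)]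
    ring
  rw [hc2] at hs
  simp only [IN]
  exact hs

lemma PH_step (hne : V.Nonempty)
    (hBdd : ∀ x : Fin n → ℝ, BddAbove ((fun ξ => ∑ i, ξ i * x i) '' V))
    (K : Finset (Fin n)) {j : Fin n} (hj : j ∉ K) :
    PH n V (insert j K) ≤ PH n V K := by
  unfold PH
  have hpos : (0:ℝ) < 2^n := by positivity
  have hnum : ∑ y : Fin n → Bool, Real.exp (IN n V (insert j K) y)
      ≤ ∑ y : Fin n → Bool, Real.exp (IN n V K y) := by
    have h2 := pair_sum j (fun y => Real.exp (IN n V (insert j K) y))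
    have h3 : ∑ y : Fin n → Bool,
        (Real.exp (IN n V (insert j K) (Function.update y j true))
          + Real.exp (IN n V (insert j K) (Function.update y j false)))
        ≤ ∑ y : Fin n → Bool, 2 * Real.exp (IN n V K y) :=
      Finset.sum_le_sum fun y _ => step_y hne hBdd K hj y
    rw [h2, ← Finset.mul_sum] at h3
    linarith
  have hposL : (0:ℝ) < ∑ y : Fin n → Bool, Real.exp (IN n V (insert j K) y) :=
    Finset.sum_pos (fun y _ => Real.exp_pos _) Finset.univ_nonempty
  apply Real.log_le_log (by positivity)
  exact (div_le_div_iff_of_pos_right hpos).mpr hnum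

lemma lapl_eq (ξ : Fin n → ℝ) : logLaplaceCube n ξ = ∑ i, lc (ξ i) := by
  unfold logLaplaceCube
  rw [integral_cubeUniform (fun x => Real.exp (∑ i, ξ i * x i))]
  have h1 : ∀ s : Fin n → Bool,
      Real.exp (∑ i, ξ i * sgn s i) = ∏ i, Real.exp (ξ i * sgn s i) := fun s =>
    Real.exp_sum _ _
  rw [Finset.sum_congr rfl (fun s _ => h1 s)]
  have h2' : ∑ s : Fin n → Bool, ∏ i, Real.exp (ξ i * sgn s i)
      = ∏ i, (Real.exp (ξ i * sb true) + Real.exp (ξ i * sb false)) :=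
    sum_prod_bool n (fun i b => Real.exp (ξ i * sb b))
  rw [h2']
  have h3 : ∀ i : Fin n, Real.exp (ξ i * sb true) + Real.exp (ξ i * sb false)
      = 2 * Real.cosh (ξ i) := by
    intro i
    rw [sb_true, sb_false, mul_one, mul_neg_one, Real.cosh_eq]
    ring
  rw [Finset.prod_congr rfl (fun i _ => h3 i), Finset.prod_mul_distrib, Finset.prod_const,
    Finset.card_univ, Fintype.card_fin, ← mul_assoc, inv_mul_cancel₀ (by positivity), one_mul,
    Real.log_prod (fun i _ => (Real.cosh_pos (ξ i)).ne')]
  rfl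

lemma PH_univ_eq : PH n V Finset.univ
    = Real.log (∫ x, Real.exp (⨆ ξ : V,
        (∑ i, (ξ : Fin n → ℝ) i * x i - logLaplaceCube n ξ)) ∂cubeUniform n) := by
  rw [integral_cubeUniform (fun x => Real.exp (⨆ ξ : V,
    (∑ i, (ξ : Fin n → ℝ) i * x i - logLaplaceCube n ξ)))]
  unfold PH
  have hSG : ∀ y ε : Fin n → Bool, SG n V Finset.univ y ε
      = ⨆ ξ : V, (∑ i, (ξ : Fin n → ℝ) i * sgn y i - logLaplaceCube n ξ) := by
    intro y ε
    unfold SG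
    refine iSup_congr fun ξ => ?_
    unfold Gf
    simp only [Finset.mem_univ, if_true]
    rw [Finset.sum_sub_distrib, lapl_eq]
  have hIN : ∀ y : Fin n → Bool, IN n V Finset.univ y
      = ⨆ ξ : V, (∑ i, (ξ : Fin n → ℝ) i * sgn y i - logLaplaceCube n ξ) := by
    intro y
    unfold IN
    rw [Finset.sum_congr rfl (fun ε _ => hSG y ε), Finset.sum_const, Finset.card_univ]
    have hcard : Fintype.card (Fin n → Bool) = 2^n := by simp
    rw [hcard, nsmul_eq_mul]
    push_cast
    rw [mul_comm, mul_div_assoc, div_self (by positivity : ((2:ℝ)^n) ≠ 0), mul_one]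
  have hsum : (∑ y : Fin n → Bool, Real.exp (IN n V Finset.univ y))
      = ∑ s : Fin n → Bool, Real.exp (⨆ ξ : V,
          (∑ i, (ξ : Fin n → ℝ) i * sgn s i - logLaplaceCube n ξ)) :=
    Finset.sum_congr rfl fun y _ => by rw [hIN y]
  rw [hsum, inv_mul_eq_div]

lemma PH_empty_eq (hne : V.Nonempty)
    (hBdd : ∀ x : Fin n → ℝ, BddAbove ((fun ξ => ∑ i, ξ i * x i) '' V)) :
    PH n V ∅ = 2 * ∫ x, (⨆ ξ : V, ∑ i, (ξ : Fin n → ℝ) i * x i) ∂cubeUniform n := by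
  haveI : Nonempty ↥V := hne.to_subtype
  rw [integral_cubeUniform (fun x => ⨆ ξ : V, ∑ i, (ξ : Fin n → ℝ) i * x i)]
  unfold PH
  have hSG : ∀ y ε : Fin n → Bool, SG n V ∅ y ε
      = 2 * ⨆ ξ : V, ∑ i, (ξ : Fin n → ℝ) i * sgn ε i := by
    intro y ε
    unfold SG Gf
    have h1 : ∀ ξ : V, (∑ i, if i ∈ (∅ : Finset (Fin n)) then
          (ξ : Fin n → ℝ) i * sgn y i - lc ((ξ : Fin n → ℝ) i)
        else 2 * (ξ : Fin n → ℝ) i * sgn ε i)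
        = 2 * ∑ i, (ξ : Fin n → ℝ) i * sgn ε i := by
      intro ξ
      rw [Finset.mul_sum]
      refine Finset.sum_congr rfl fun i _ => ?_
      simp [mul_assoc]
    rw [iSup_congr h1]
    refine two_mul_iSup _ ?_
    have h5 := hBdd (sgn ε)
    rwa [Set.image_eq_range] at h5
  have hIN : ∀ y : Fin n → Bool, IN n V ∅ y
      = 2 * (((2:ℝ)^n)⁻¹ * ∑ s : Fin n → Bool, ⨆ ξ : V, ∑ i, (ξ : Fin n → ℝ) i * sgn s i) := by
    intro y
    unfold IN
    rw [Finset.sum_congr rfl (fun ε _ => hSG y ε), ← Finset.mul_sum, div_eq_mul_inv]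
    ring
  rw [Finset.sum_congr rfl (fun y _ => by rw [hIN y])]
  rw [Finset.sum_const, Finset.card_univ]
  have hcard : Fintype.card (Fin n → Bool) = 2^n := by simp
  rw [hcard, nsmul_eq_mul]
  push_cast
  rw [mul_comm, mul_div_assoc, div_self (by positivity : ((2:ℝ)^n) ≠ 0), mul_one, Real.log_exp]

lemma PH_le_empty (hne : V.Nonempty)
    (hBdd : ∀ x : Fin n → ℝ, BddAbove ((fun ξ => ∑ i, ξ i * x i) '' V))
    (K : Finset (Fin n)) : PH n V K ≤ PH n V ∅ := by
  induction K using Finset.induction_on with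
  | empty => exact le_refl _
  | @insert a s ha ih => exact (PH_step hne hBdd s ha).trans ih

end Main
end StrongAux

/-- **Strong integrability of Bernoulli processes.** There is a universal constant `κ > 0`
such that for every countable `V ⊆ ℝⁿ`,
`log ∫ exp (sup_{ξ ∈ V} (⟨ξ,x⟩ - Λ_μ(ξ))) dμ(x) ≤ κ b(V)`, where
`b(V) = E[sup_{ξ ∈ V} ⟨ξ,ε⟩]` with `ε` uniform on `{-1,1}ⁿ`. -/
theorem strong_integrability_bernoulli :
    ∃ κ : ℝ, 0 < κ ∧ ∀ (n : ℕ) (V : Set (Fin n → ℝ)), V.Countable → V.Nonempty →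
      (∀ x : Fin n → ℝ, BddAbove ((fun ξ => ∑ i, ξ i * x i) '' V)) →
      Real.log (∫ x, Real.exp (⨆ ξ : V, (∑ i, (ξ : Fin n → ℝ) i * x i - logLaplaceCube n ξ))
          ∂cubeUniform n) ≤
        κ * ∫ x, (⨆ ξ : V, ∑ i, (ξ : Fin n → ℝ) i * x i) ∂cubeUniform n := by
  refine ⟨2, by norm_num, ?_⟩
  intro n V _hVc hne hBdd
  calc Real.log (∫ x, Real.exp (⨆ ξ : V,
        (∑ i, (ξ : Fin n → ℝ) i * x i - logLaplaceCube n ξ)) ∂cubeUniform n)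
      = StrongAux.PH n V Finset.univ := (StrongAux.PH_univ_eq).symm
    _ ≤ StrongAux.PH n V ∅ := StrongAux.PH_le_empty hne hBdd _
    _ = 2 * ∫ x, (⨆ ξ : V, ∑ i, (ξ : Fin n → ℝ) i * x i) ∂cubeUniform n :=
        StrongAux.PH_empty_eq hne hBdd
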